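/- (Carleman-type approximation on ℝ, scalar reduction for the trivial system) Given a continuous function f : ℝ → ℂ and a continuous strictly positive function ε : ℝ → (0, ∞), there exists an entire function g : ℂ → ℂ such that |f(x) − g(x)| < ε(x) for every x ∈ ℝ. -/

import Mathlib

open MeasureTheory Complex Filter Set Metric intervalIntegral
open scoped Real Topology

noncomputable section CarlemanAux

namespace CarlemanAux

/-- The Gaussian convolution of `t` with parameter `s`. -/
def gconv (t : ℝ → ℂ) (s : ℝ) (z : ℂ) : ℂ :=
  (s / Real.sqrt Real.pi) • ∫ u : ℝ, t u * Complex.exp (-(s : ℂ) ^ 2 * (z - (u : ℂ)) ^ 2)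

lemma norm_gker (s : ℝ) (z : ℂ) (u : ℝ) :
    ‖Complex.exp (-(s : ℂ) ^ 2 * (z - (u : ℂ)) ^ 2)‖
      = Real.exp (-(s ^ 2) * ((z.re - u) ^ 2 - z.im ^ 2)) := by
  rw [Complex.norm_exp]
  congr 1
  simp [pow_two, Complex.mul_re, Complex.mul_im, Complex.sub_re, Complex.sub_im,
    Complex.ofReal_re, Complex.ofReal_im, Complex.neg_re, Complex.neg_im]

lemma gker_ofReal (s x u : ℝ) :
    Complex.exp (-(s : ℂ) ^ 2 * ((x : ℂ) - (u : ℂ)) ^ 2)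
      = ((Real.exp (-(s ^ 2) * (x - u) ^ 2) : ℝ) : ℂ) := by
  rw [Complex.ofReal_exp]
  congr 1
  push_cast
  ring

lemma integrable_gauss_shift {c : ℝ} (hc : 0 < c) (x : ℝ) :
    Integrable (fun u : ℝ => Real.exp (-c * (x - u) ^ 2)) := by
  have h : (fun u : ℝ => Real.exp (-c * (x - u) ^ 2))
      = fun u : ℝ => (fun v : ℝ => Real.exp (-c * v ^ 2)) (u - x) := by
    funext u; congr 1; ring
  rw [h]
  exact (integrable_exp_neg_mul_sq hc).comp_sub_right x

lemma integral_gauss_shift {c : ℝ} (hc : 0 < c) (x : ℝ) :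
    (∫ u : ℝ, Real.exp (-c * (x - u) ^ 2)) = Real.sqrt (Real.pi / c) := by
  have h : (fun u : ℝ => Real.exp (-c * (x - u) ^ 2))
      = fun u : ℝ => (fun v : ℝ => Real.exp (-c * v ^ 2)) (u - x) := by
    funext u; congr 1; ring
  rw [h, integral_sub_right_eq_self (fun v : ℝ => Real.exp (-c * v ^ 2)) x,
    integral_gaussian]

lemma continuous_gker (s : ℝ) (z : ℂ) :
    Continuous fun u : ℝ => Complex.exp (-(s : ℂ) ^ 2 * (z - (u : ℂ)) ^ 2) := by
  fun_prop

lemma integrable_tker {t : ℝ → ℂ} (ht : Continuous t) (hcs : HasCompactSupport t)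
    (s : ℝ) (z : ℂ) :
    Integrable (fun u : ℝ => t u * Complex.exp (-(s : ℂ) ^ 2 * (z - (u : ℂ)) ^ 2)) :=
  (ht.mul (continuous_gker s z)).integrable_of_hasCompactSupport (hcs.mul_right)

lemma gconv_differentiable {t : ℝ → ℂ} (ht : Continuous t) (hcs : HasCompactSupport t)
    (s : ℝ) : Differentiable ℂ (gconv t s) := by
  intro z₀
  set F : ℂ → ℝ → ℂ := fun z u => t u * Complex.exp (-(s : ℂ) ^ 2 * (z - (u : ℂ)) ^ 2) with hF
  set F' : ℂ → ℝ → ℂ := fun z u =>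
    t u * (Complex.exp (-(s : ℂ) ^ 2 * (z - (u : ℂ)) ^ 2)
      * (-(s : ℂ) ^ 2 * (2 * (z - (u : ℂ))))) with hF'
  have hFcont : ∀ z : ℂ, Continuous fun u : ℝ => F z u := fun z =>
    ht.mul (continuous_gker s z)
  have hF'cont : Continuous fun p : ℂ × ℝ => F' p.1 p.2 := by
    apply Continuous.mul
    · exact ht.comp continuous_snd
    · apply Continuous.mul
      · apply Complex.continuous_exp.comp
        fun_prop
      · fun_prop
  -- bound on the product of the closed ball and the support
  obtain ⟨C, hC⟩ := ((isCompact_closedBall z₀ 1).prod hcs.isCompact).exists_bound_of_continuousOn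
    hF'cont.continuousOn
  have key : HasDerivAt (fun z => ∫ u : ℝ, F z u) (∫ u : ℝ, F' z₀ u) z₀ := by
    refine (hasDerivAt_integral_of_dominated_loc_of_deriv_le (ball_mem_nhds z₀ one_pos)
      (F := F) (F' := F')
      (bound := Set.indicator (tsupport t) fun _ => C)
      (Filter.Eventually.of_forall fun z => (hFcont z).aestronglyMeasurable)
      (integrable_tker ht hcs s z₀)
      ((hF'cont.comp (Continuous.prodMk_right z₀)).aestronglyMeasurable)
      (Filter.Eventually.of_forall ?_) ?_ (Filter.Eventually.of_forall ?_)).2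
    · -- bound
      intro u z hz
      by_cases hu : u ∈ tsupport t
      · rw [Set.indicator_of_mem hu]
        exact hC (z, u) ⟨ball_subset_closedBall hz, hu⟩
      · rw [Set.indicator_of_notMem hu]
        have : t u = 0 := image_eq_zero_of_notMem_tsupport hu
        simp [hF', this]
    · -- integrability of bound
      rw [integrable_indicator_iff (isClosed_tsupport t).measurableSet]
      exact integrableOn_const hcs.isCompact.measure_ne_top
    · -- differentiability
      intro u z _
      have h1 : HasDerivAt (fun z : ℂ => z - (u : ℂ)) 1 z := (hasDerivAt_id z).sub_const _
      have h2 : HasDerivAt (fun z : ℂ => (z - (u : ℂ)) ^ 2) (2 * (z - (u : ℂ))) z := by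
        simpa using h1.fun_pow 2
      have h3 := h2.const_mul (-(s : ℂ) ^ 2)
      have h4 := h3.cexp
      have h5 := h4.const_mul (t u)
      exact h5
  exact ((key.const_smul (s / Real.sqrt Real.pi)).differentiableAt :)

lemma sqrt_pi_pos : 0 < Real.sqrt Real.pi := Real.sqrt_pos.2 Real.pi_pos

lemma gconv_sub_self {t : ℝ → ℂ} (ht : Continuous t) (hcs : HasCompactSupport t)
    {s : ℝ} (hs : 0 < s) (x : ℝ) :
    gconv t s x - t x = (s / Real.sqrt Real.pi) •
      ∫ u : ℝ, (t u - t x) * Complex.exp (-(s : ℂ) ^ 2 * ((x : ℂ) - (u : ℂ)) ^ 2) := by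
  have hs2 : (0:ℝ) < s ^ 2 := by positivity
  have hK : Integrable (fun u : ℝ =>
      Complex.exp (-(s : ℂ) ^ 2 * ((x : ℂ) - (u : ℂ)) ^ 2)) := by
    simp_rw [gker_ofReal]
    exact (integrable_gauss_shift hs2 x).ofReal
  have hint : (∫ u : ℝ, (t u - t x) * Complex.exp (-(s : ℂ) ^ 2 * ((x : ℂ) - (u : ℂ)) ^ 2))
      = (∫ u : ℝ, t u * Complex.exp (-(s : ℂ) ^ 2 * ((x : ℂ) - (u : ℂ)) ^ 2))
        - t x * ∫ u : ℝ, Complex.exp (-(s : ℂ) ^ 2 * ((x : ℂ) - (u : ℂ)) ^ 2) := by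
    rw [← MeasureTheory.integral_const_mul, ← integral_sub (integrable_tker ht hcs s x)
      (hK.const_mul (t x))]
    congr 1; funext u; ring
  have hKval : (∫ u : ℝ, Complex.exp (-(s : ℂ) ^ 2 * ((x : ℂ) - (u : ℂ)) ^ 2))
      = ((Real.sqrt (Real.pi / s ^ 2) : ℝ) : ℂ) := by
    simp_rw [gker_ofReal]
    rw [← integral_gauss_shift hs2 x]
    exact _root_.integral_ofReal
  rw [hint, smul_sub, hKval]
  have hscal : (s / Real.sqrt Real.pi) • (t x * ((Real.sqrt (Real.pi / s ^ 2) : ℝ) : ℂ))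
      = t x := by
    rw [Complex.real_smul]
    have h1 : Real.sqrt (Real.pi / s ^ 2) = Real.sqrt Real.pi / s := by
      rw [Real.sqrt_div Real.pi_pos.le, Real.sqrt_sq hs.le]
    rw [h1]
    have h2 : ((s / Real.sqrt Real.pi : ℝ) : ℂ) * ((Real.sqrt Real.pi / s : ℝ) : ℂ) = 1 := by
      norm_cast
      field_simp
    calc ((s / Real.sqrt Real.pi : ℝ) : ℂ) * (t x * ((Real.sqrt Real.pi / s : ℝ) : ℂ))
        = ((s / Real.sqrt Real.pi : ℝ) : ℂ) * ((Real.sqrt Real.pi / s : ℝ) : ℂ) * t x := by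
          ring
      _ = t x := by rw [h2, one_mul]
  rw [hscal]
  rfl

lemma tendsto_exp_neg_sq {c : ℝ} (hc : 0 < c) :
    Tendsto (fun s : ℝ => Real.exp (-(c * s ^ 2))) atTop (𝓝 0) := by
  have h1 : Tendsto (fun s : ℝ => c * s ^ 2) atTop atTop :=
    (tendsto_pow_atTop (by norm_num)).const_mul_atTop hc
  exact Real.tendsto_exp_atBot.comp ((tendsto_neg_atTop_atBot).comp h1)

lemma tendsto_mul_exp_neg_sq {c : ℝ} (hc : 0 < c) :
    Tendsto (fun s : ℝ => s * Real.exp (-(c * s ^ 2))) atTop (𝓝 0) := by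
  have h := tendsto_rpow_mul_exp_neg_mul_atTop_nhds_zero 1 c hc
  refine tendsto_of_tendsto_of_tendsto_of_le_of_le'
    (tendsto_const_nhds : Tendsto (fun _ : ℝ => (0:ℝ)) atTop (𝓝 0)) h ?_ ?_
  · filter_upwards [eventually_ge_atTop (0:ℝ)] with s hs
    positivity
  · filter_upwards [eventually_ge_atTop (1:ℝ)] with s hs
    have hs0 : (0:ℝ) < s := lt_of_lt_of_le one_pos hs
    rw [Real.rpow_one]
    have : Real.exp (-(c * s ^ 2)) ≤ Real.exp (-(c * s)) := by
      rw [Real.exp_le_exp]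
      have h2 : c*s*1 ≤ c*s*s := mul_le_mul_of_nonneg_left hs (by positivity)
      nlinarith [h2]
    calc s * Real.exp (-(c * s ^ 2)) ≤ s * Real.exp (-(c * s)) := by
          exact mul_le_mul_of_nonneg_left this hs0.le
      _ = s * Real.exp (-c * s) := by ring_nf
  
lemma gconv_approx {t : ℝ → ℂ} (ht : Continuous t) (hcs : HasCompactSupport t)
    {η : ℝ} (hη : 0 < η) :
    ∃ s₀ : ℝ, 1 ≤ s₀ ∧ ∀ s, s₀ ≤ s → ∀ x : ℝ, ‖gconv t s x - t x‖ ≤ η := by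
  obtain ⟨M, hM⟩ := hcs.exists_bound_of_continuous ht
  have hM0 : 0 ≤ M := le_trans (norm_nonneg _) (hM 0)
  have uc : UniformContinuous t :=
    ht.uniformContinuous_of_tendsto_cocompact hcs.is_zero_at_infty
  rw [Metric.uniformContinuous_iff] at uc
  obtain ⟨δ, hδ0, hδ⟩ := uc (η/2) (by positivity)
  have htd : Tendsto (fun s : ℝ => (2*M*Real.sqrt 2) * Real.exp (-(δ^2/2 * s^2)))
      atTop (𝓝 0) := by
    simpa using (tendsto_exp_neg_sq (show (0:ℝ) < δ^2/2 by positivity)).const_mul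
      (2*M*Real.sqrt 2)
  have hev : ∀ᶠ s : ℝ in atTop,
      (2*M*Real.sqrt 2) * Real.exp (-(δ^2/2 * s^2)) ≤ η/2 ∧ 1 ≤ s := by
    filter_upwards [htd.eventually_le_const (show (0:ℝ) < η/2 by positivity),
      eventually_ge_atTop (1:ℝ)] with s h1 h2 using ⟨h1, h2⟩
  obtain ⟨s₀, hs₀⟩ := hev.exists_forall_of_atTop
  refine ⟨max s₀ 1, le_max_right _ _, fun s hs x => ?_⟩
  obtain ⟨htail, hs1⟩ := hs₀ s (le_trans (le_max_left _ _) hs)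
  have hs0 : (0:ℝ) < s := lt_of_lt_of_le one_pos hs1
  have hs2 : (0:ℝ) < s^2 := by positivity
  have hs2' : (0:ℝ) < s^2/2 := by positivity
  rw [gconv_sub_self ht hcs hs0 x, norm_smul, Real.norm_of_nonneg (by positivity)]
  set B : ℝ → ℝ := fun u => (η/2) * Real.exp (-(s^2) * (x-u)^2)
    + (2*M*Real.exp (-(δ^2/2 * s^2))) * Real.exp (-(s^2/2) * (x-u)^2) with hB
  have hBint : Integrable B :=
    ((integrable_gauss_shift hs2 x).const_mul _).add
      ((integrable_gauss_shift hs2' x).const_mul _)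
  have hpt : ∀ u : ℝ, ‖(t u - t x) * Complex.exp (-(s:ℂ)^2 * ((x:ℂ) - (u:ℂ))^2)‖ ≤ B u := by
    intro u
    rw [norm_mul]
    have hker : ‖Complex.exp (-(s:ℂ)^2 * ((x:ℂ) - (u:ℂ))^2)‖
        = Real.exp (-(s^2) * (x-u)^2) := by
      simpa using norm_gker s (x:ℂ) u
    rw [hker]
    rcases lt_or_ge (dist u x) δ with hnear | hfar
    · have h1 : ‖t u - t x‖ ≤ η/2 := le_of_lt (by
        have := hδ hnear
        rwa [dist_eq_norm] at this)
      have : ‖t u - t x‖ * Real.exp (-(s^2) * (x-u)^2)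
          ≤ (η/2) * Real.exp (-(s^2) * (x-u)^2) :=
        mul_le_mul_of_nonneg_right h1 (Real.exp_nonneg _)
      exact le_add_of_le_of_nonneg this (by positivity)
    · have h1 : ‖t u - t x‖ ≤ 2*M :=
        le_trans (norm_sub_le _ _) (by linarith [hM u, hM x])
      have hd : δ ≤ |u - x| := by rwa [Real.dist_eq] at hfar
      have hd2 : δ^2 ≤ (x-u)^2 := by
        have h := abs_nonneg (u - x)
        have : δ^2 ≤ |u-x|^2 := by nlinarith
        calc δ^2 ≤ |u-x|^2 := this
          _ = (x-u)^2 := by rw [_root_.sq_abs]; ring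
      have hexp : Real.exp (-(s^2) * (x-u)^2)
          ≤ Real.exp (-(δ^2/2 * s^2)) * Real.exp (-(s^2/2) * (x-u)^2) := by
        rw [← Real.exp_add, Real.exp_le_exp]
        nlinarith [sq_nonneg s]
      have : ‖t u - t x‖ * Real.exp (-(s^2) * (x-u)^2)
          ≤ (2*M) * (Real.exp (-(δ^2/2 * s^2)) * Real.exp (-(s^2/2) * (x-u)^2)) := by
        apply mul_le_mul h1 hexp (Real.exp_nonneg _) (by positivity)
      exact le_add_of_nonneg_of_le (by positivity) (by rw [mul_assoc]; exact this)
  have hnorm : ‖∫ u : ℝ, (t u - t x) * Complex.exp (-(s:ℂ)^2 * ((x:ℂ) - (u:ℂ))^2)‖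
      ≤ ∫ u : ℝ, B u :=
    norm_integral_le_of_norm_le hBint (Filter.Eventually.of_forall hpt)
  have hBval : (∫ u : ℝ, B u) = (η/2) * Real.sqrt (Real.pi / s^2)
      + (2*M*Real.exp (-(δ^2/2 * s^2))) * Real.sqrt (Real.pi / (s^2/2)) := by
    rw [hB]
    rw [integral_add ((integrable_gauss_shift hs2 x).const_mul _)
      ((integrable_gauss_shift hs2' x).const_mul _),
      MeasureTheory.integral_const_mul, MeasureTheory.integral_const_mul,
      integral_gauss_shift hs2 x, integral_gauss_shift hs2' x]
  have hsq1 : Real.sqrt (Real.pi / s^2) = Real.sqrt Real.pi / s := by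
    rw [Real.sqrt_div Real.pi_pos.le, Real.sqrt_sq hs0.le]
  have hsq2 : Real.sqrt (Real.pi / (s^2/2)) = Real.sqrt 2 * Real.sqrt Real.pi / s := by
    rw [show Real.pi / (s^2/2) = (2 * Real.pi) / s^2 by field_simp,
      Real.sqrt_div (by positivity), Real.sqrt_sq hs0.le,
      Real.sqrt_mul (by norm_num : (0:ℝ) ≤ 2)]
  calc s / Real.sqrt Real.pi * ‖∫ u : ℝ, (t u - t x)
        * Complex.exp (-(s:ℂ)^2 * ((x:ℂ) - (u:ℂ))^2)‖
      ≤ s / Real.sqrt Real.pi * ((η/2) * Real.sqrt (Real.pi / s^2)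
        + (2*M*Real.exp (-(δ^2/2 * s^2))) * Real.sqrt (Real.pi / (s^2/2))) := by
        apply mul_le_mul_of_nonneg_left _ (by positivity)
        rw [← hBval]; exact hnorm
    _ = η/2 + (2*M*Real.sqrt 2) * Real.exp (-(δ^2/2 * s^2)) := by
        rw [hsq1, hsq2]
        have hπ : Real.sqrt Real.pi ≠ 0 := ne_of_gt sqrt_pi_pos
        field_simp
    _ ≤ η/2 + η/2 := by linarith
    _ = η := by ring

lemma gconv_small {t : ℝ → ℂ} (ht : Continuous t) (hcs : HasCompactSupport t)
    {a b : ℝ} (ha : 1 ≤ a) (hb : 0 < b)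
    (hsp : ∀ u : ℝ, t u ≠ 0 → a ≤ |u| ∧ |u| ≤ b) {θ : ℝ} (hθ : 0 < θ) :
    ∃ s₀ : ℝ, 1 ≤ s₀ ∧ ∀ s, s₀ ≤ s → ∀ z : ℂ, ‖z‖ ≤ a/2 → ‖gconv t s z‖ ≤ θ := by
  obtain ⟨M, hM⟩ := hcs.exists_bound_of_continuous ht
  have hM0 : 0 ≤ M := le_trans (norm_nonneg _) (hM 0)
  have htd : Tendsto (fun s : ℝ => (2*b*M/Real.sqrt Real.pi)
      * (s * Real.exp (-(a^2/4 * s^2)))) atTop (𝓝 0) := by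
    simpa using (tendsto_mul_exp_neg_sq (show (0:ℝ) < a^2/4 by positivity)).const_mul
      (2*b*M/Real.sqrt Real.pi)
  have hev : ∀ᶠ s : ℝ in atTop,
      (2*b*M/Real.sqrt Real.pi) * (s * Real.exp (-(a^2/4 * s^2))) ≤ θ ∧ 1 ≤ s := by
    filter_upwards [htd.eventually_le_const hθ, eventually_ge_atTop (1:ℝ)] with s h1 h2
      using ⟨h1, h2⟩
  obtain ⟨s₀, hs₀⟩ := hev.exists_forall_of_atTop
  refine ⟨max s₀ 1, le_max_right _ _, fun s hs z hz => ?_⟩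
  obtain ⟨htail, hs1⟩ := hs₀ s (le_trans (le_max_left _ _) hs)
  have hs0 : (0:ℝ) < s := lt_of_lt_of_le one_pos hs1
  have hre : z.re^2 + z.im^2 ≤ a^2/4 := by
    have h1 : ‖z‖^2 ≤ (a/2)^2 := pow_le_pow_left₀ (norm_nonneg _) hz 2
    have h2 : ‖z‖^2 = z.re^2 + z.im^2 := by
      rw [Complex.sq_norm, Complex.normSq_apply]; ring
    nlinarith [h1, h2]
  have hzre : z.re ≤ a/2 ∧ -(a/2) ≤ z.re := by
    have h1 : z.re^2 ≤ (a/2)^2 := by nlinarith [sq_nonneg z.im]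
    have h2 := abs_le_of_sq_le_sq' h1 (by positivity)
    exact ⟨h2.2, h2.1⟩
  set bound : ℝ → ℝ := Set.indicator (Icc (-b) b)
    (fun _ => M * Real.exp (-(a^2/4 * s^2))) with hbd
  have hbint : Integrable bound := by
    rw [hbd, integrable_indicator_iff measurableSet_Icc]
    exact integrableOn_const (by rw [Real.volume_Icc]; exact ENNReal.ofReal_ne_top)
  have hpt : ∀ u : ℝ, ‖t u * Complex.exp (-(s:ℂ)^2 * (z - (u:ℂ))^2)‖ ≤ bound u := by
    intro u
    by_cases htu : t u = 0
    · simp only [htu, zero_mul, norm_zero]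
      exact Set.indicator_nonneg (fun _ _ => by positivity) u
    · obtain ⟨hau, hub⟩ := hsp u htu
      have hmem : u ∈ Icc (-b) b := by
        rcases abs_le.1 hub with ⟨h1, h2⟩; exact ⟨h1, h2⟩
      rw [hbd, Set.indicator_of_mem hmem, norm_mul, norm_gker]
      have hkey : a^2/4 ≤ (z.re - u)^2 - z.im^2 := by
        rcases abs_cases u with ⟨hu1, hu2⟩ | ⟨hu1, hu2⟩
        · -- u ≥ 0, so a ≤ u
          have h1 : a ≤ u := hu1 ▸ hau
          nlinarith [sq_nonneg (z.re - a/2), hzre.1, hre]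
        · -- u ≤ 0, so u ≤ -a
          have h1 : u ≤ -a := by linarith [hu1 ▸ hau]
          nlinarith [sq_nonneg (z.re + a/2), hzre.2, hre]
      have hexp : Real.exp (-s^2 * ((z.re - u)^2 - z.im^2))
          ≤ Real.exp (-(a^2/4 * s^2)) := by
        rw [Real.exp_le_exp]
        nlinarith [sq_nonneg s, mul_le_mul_of_nonneg_left hkey (sq_nonneg s)]
      exact mul_le_mul (hM u) hexp (Real.exp_nonneg _) hM0
  have hnorm : ‖∫ u : ℝ, t u * Complex.exp (-(s:ℂ)^2 * (z - (u:ℂ))^2)‖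
      ≤ ∫ u : ℝ, bound u :=
    norm_integral_le_of_norm_le hbint (Filter.Eventually.of_forall hpt)
  have hbval : (∫ u : ℝ, bound u) ≤ M * Real.exp (-(a^2/4 * s^2)) * (2*b) := by
    rw [hbd, MeasureTheory.integral_indicator measurableSet_Icc]
    rw [MeasureTheory.setIntegral_const, measureReal_def, Real.volume_Icc, smul_eq_mul]
    rw [ENNReal.toReal_ofReal (by linarith)]
    have : b - -b = 2*b := by ring
    rw [this]
    nlinarith [Real.exp_nonneg (-(a^2/4 * s^2))]
  calc ‖gconv t s z‖ = (s / Real.sqrt Real.pi)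
        * ‖∫ u : ℝ, t u * Complex.exp (-(s:ℂ)^2 * (z - (u:ℂ))^2)‖ := by
        rw [gconv, norm_smul, Real.norm_of_nonneg (by positivity)]
    _ ≤ (s / Real.sqrt Real.pi) * (M * Real.exp (-(a^2/4 * s^2)) * (2*b)) := by
        apply mul_le_mul_of_nonneg_left (le_trans hnorm hbval) (by positivity)
    _ = (2*b*M/Real.sqrt Real.pi) * (s * Real.exp (-(a^2/4 * s^2))) := by ring
    _ ≤ θ := htail

lemma stage {t : ℝ → ℂ} (ht : Continuous t) (hcs : HasCompactSupport t) (m : ℕ)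
    (hsp : ∀ u : ℝ, t u ≠ 0 → (m:ℝ) - 3 ≤ |u|) (h0 : 3 ≤ m → t 0 = 0)
    {η : ℝ} (hη : 0 < η) :
    ∃ g : ℂ → ℂ, Differentiable ℂ g ∧ (∀ x : ℝ, ‖g x - t x‖ ≤ η) ∧
      ∀ z : ℂ, ‖z‖ ≤ ((m:ℝ) - 3)/2 → ‖g z‖ ≤ η := by
  obtain ⟨b', hb'⟩ : ∃ b : ℝ, ∀ u : ℝ, t u ≠ 0 → |u| ≤ b := by
    obtain ⟨r, hr⟩ := hcs.isCompact.isBounded.subset_closedBall 0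
    refine ⟨r, fun u hu => ?_⟩
    have := hr (subset_tsupport t (Function.mem_support.2 hu))
    simpa [Real.dist_eq] using this
  obtain ⟨s₁, hs₁1, hs₁⟩ := gconv_approx ht hcs hη
  rcases le_or_gt 4 m with hm4 | hm4
  · -- the genuine case : use both estimates
    have ha : (1:ℝ) ≤ (m:ℝ) - 3 := by
      have : (4:ℝ) ≤ (m:ℝ) := by exact_mod_cast hm4
      linarith
    have hb : (0:ℝ) < max b' 1 := lt_of_lt_of_le one_pos (le_max_right _ _)
    have hsp' : ∀ u : ℝ, t u ≠ 0 → (m:ℝ) - 3 ≤ |u| ∧ |u| ≤ max b' 1 :=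
      fun u hu => ⟨hsp u hu, le_trans (hb' u hu) (le_max_left _ _)⟩
    obtain ⟨s₂, hs₂1, hs₂⟩ := gconv_small ht hcs ha hb hsp' hη
    refine ⟨gconv t (max s₁ s₂), gconv_differentiable ht hcs _, ?_, ?_⟩
    · exact hs₁ _ (le_max_left _ _)
    · exact hs₂ _ (le_max_right _ _)
  · -- degenerate case : m ≤ 3
    refine ⟨gconv t s₁, gconv_differentiable ht hcs _, hs₁ s₁ le_rfl, ?_⟩
    intro z hz
    rcases le_or_gt 3 m with hm3 | hm3
    · -- m = 3 : the disc is the single point 0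
      have hm : m = 3 := le_antisymm (by omega) hm3
      have hz0 : z = 0 := by
        rw [← norm_le_zero_iff]
        simpa [hm] using hz
      have ht0 : t 0 = 0 := h0 hm3
      have := hs₁ s₁ le_rfl 0
      rw [ht0, sub_zero] at this
      simpa [hz0] using this
    · -- m ≤ 2 : the disc is empty
      exfalso
      have h1 : ((m:ℝ) - 3)/2 < 0 := by
        have : (m:ℝ) ≤ 2 := by exact_mod_cast Nat.lt_succ_iff.mp hm3
        linarith
      linarith [norm_nonneg z, le_trans (norm_nonneg z) hz]

/-- clamp to `[0,1]`. -/
def clamp01 (r : ℝ) : ℝ := max 0 (min 1 r)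

lemma clamp01_nonneg (r : ℝ) : 0 ≤ clamp01 r := le_max_left _ _
lemma clamp01_le_one (r : ℝ) : clamp01 r ≤ 1 :=
  max_le zero_le_one (min_le_left _ _)
lemma clamp01_of_one_le {r : ℝ} (h : 1 ≤ r) : clamp01 r = 1 := by
  rw [clamp01, min_eq_left h, max_eq_right zero_le_one]
lemma clamp01_of_nonpos {r : ℝ} (h : r ≤ 0) : clamp01 r = 0 := by
  rw [clamp01, min_eq_right (le_trans h zero_le_one), max_eq_left h]
lemma continuous_clamp01 : Continuous clamp01 :=
  continuous_const.max (continuous_const.min continuous_id)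

/-- the cut-off used at stage `m` : it equals `1` on `{m-2 ≤ |x| ≤ m-1}`, vanishes for
`|x| ≤ m-3` and for `|x| ≥ m`. -/
def psi (m : ℕ) (x : ℝ) : ℝ := clamp01 (|x| - ((m:ℝ) - 3)) * clamp01 ((m:ℝ) - |x|)

lemma psi_cont (m : ℕ) : Continuous (psi m) :=
  (continuous_clamp01.comp (_root_.continuous_abs.sub continuous_const)).mul
    (continuous_clamp01.comp (continuous_const.sub _root_.continuous_abs))
lemma psi_nonneg (m : ℕ) (x : ℝ) : 0 ≤ psi m x :=
  mul_nonneg (clamp01_nonneg _) (clamp01_nonneg _)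
lemma psi_le_one (m : ℕ) (x : ℝ) : psi m x ≤ 1 :=
  mul_le_one₀ (clamp01_le_one _) (clamp01_nonneg _) (clamp01_le_one _)
lemma psi_eq_one {m : ℕ} {x : ℝ} (h1 : (m:ℝ) - 2 ≤ |x|) (h2 : |x| ≤ (m:ℝ) - 1) :
    psi m x = 1 := by
  rw [psi, clamp01_of_one_le (by linarith), clamp01_of_one_le (by linarith), mul_one]
lemma psi_inner {m : ℕ} {x : ℝ} (h : |x| ≤ (m:ℝ) - 3) : psi m x = 0 := by
  rw [psi, clamp01_of_nonpos (by linarith), zero_mul]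
lemma psi_outer {m : ℕ} {x : ℝ} (h : (m:ℝ) ≤ |x|) : psi m x = 0 := by
  rw [psi, show clamp01 ((m:ℝ) - |x|) = 0 from clamp01_of_nonpos (by linarith), mul_zero]

end CarlemanAux

open CarlemanAux

/-- classical Carleman approximation theorem on ℝ. -/
theorem carleman_approximation (f : ℝ → ℂ) (hf : Continuous f)
    (ε : ℝ → ℝ) (hε : Continuous ε) (hεpos : ∀ x, 0 < ε x) :
    ∃ g : ℂ → ℂ, Differentiable ℂ g ∧ ∀ x : ℝ, ‖f x - g x‖ < ε x := by
  classical
  -- the minimum of ε on [-m, m]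
  have hδ : ∀ m : ℕ, ∃ d : ℝ, 0 < d ∧ ∀ x : ℝ, |x| ≤ (m:ℝ) → d ≤ ε x := by
    intro m
    obtain ⟨x₀, hx₀, hmin⟩ := isCompact_Icc.exists_isMinOn
      (⟨0, mem_Icc.2 ⟨neg_nonpos.2 (Nat.cast_nonneg m), Nat.cast_nonneg m⟩⟩ :
        (Icc (-(m:ℝ)) m).Nonempty) hε.continuousOn
    exact ⟨ε x₀, hεpos x₀, fun x hx => hmin (mem_Icc.2 (abs_le.1 hx))⟩
  choose δ hδpos hδle using hδ
  set η : ℕ → ℝ := fun m => min ((1/2)^m * (δ m / 2)) ((1/2)^m) with hηdef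
  have hηpos : ∀ m, 0 < η m := fun m => lt_min (mul_pos (by positivity) (half_pos (hδpos m))) (by positivity)
  have hη1 : ∀ m, η m ≤ (1/2)^m := fun m => min_le_right _ _
  have hη2 : ∀ m, η m ≤ (1/2)^m * (δ m / 2) := fun m => min_le_left _ _
  -- the existence of one corrective stage
  have hstage : ∀ (m : ℕ) (S : ℂ → ℂ), Differentiable ℂ S →
      ∃ g : ℂ → ℂ, Differentiable ℂ g ∧
        (∀ x : ℝ, ‖g x - ((psi m x : ℝ) : ℂ) * (f x - S x)‖ ≤ η m) ∧
        (∀ z : ℂ, ‖z‖ ≤ ((m:ℝ) - 3)/2 → ‖g z‖ ≤ η m) := by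
    intro m S hS
    set t : ℝ → ℂ := fun x => ((psi m x : ℝ) : ℂ) * (f x - S x) with htdef
    have ht : Continuous t :=
      (Complex.continuous_ofReal.comp (psi_cont m)).mul
        (hf.sub (hS.continuous.comp Complex.continuous_ofReal))
    have hcs : HasCompactSupport t := by
      apply HasCompactSupport.intro (isCompact_Icc : IsCompact (Icc (-(m:ℝ)) m))
      intro x hx
      have h1 : (m:ℝ) ≤ |x| := by
        by_contra h
        exact hx (mem_Icc.2 (abs_le.1 (le_of_not_ge h)))
      rw [htdef]
      simp [psi_outer h1]
    have hsp : ∀ u : ℝ, t u ≠ 0 → (m:ℝ) - 3 ≤ |u| := by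
      intro u hu
      by_contra h
      exact hu (by rw [htdef]; simp [psi_inner (le_of_not_ge h)])
    have h0 : 3 ≤ m → t 0 = 0 := by
      intro hm
      have : |(0:ℝ)| ≤ (m:ℝ) - 3 := by
        have : (3:ℝ) ≤ (m:ℝ) := by exact_mod_cast hm
        simp; linarith
      rw [htdef]; simp [psi_inner this]
    exact stage ht hcs m hsp h0 (hηpos m)
  choose G hGdiff hGapprox hGdisc using hstage
  -- the recursively defined partial sums
  let SS : ℕ → {S : ℂ → ℂ // Differentiable ℂ S} := fun n =>
    Nat.rec ⟨fun _ => (0:ℂ), differentiable_const 0⟩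
      (fun m Sm => ⟨fun z => Sm.1 z + G (m+1) Sm.1 Sm.2 z,
        Sm.2.add (hGdiff (m+1) Sm.1 Sm.2)⟩) n
  have hSS0 : ∀ z : ℂ, (SS 0).1 z = 0 := fun _ => rfl
  have hSSs : ∀ (m : ℕ) (z : ℂ),
      (SS (m+1)).1 z = (SS m).1 z + G (m+1) (SS m).1 (SS m).2 z := fun _ _ => rfl
  -- the invariant
  have inv : ∀ m : ℕ, ∀ x : ℝ, |x| ≤ (m:ℝ) - 1 →
      ‖f x - (SS m).1 x‖ ≤ (1 - (1/2:ℝ)^m) * (ε x / 2) := by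
    intro m
    induction m with
    | zero =>
      intro x hx
      exfalso
      have := abs_nonneg x
      simp at hx
      linarith
    | succ m ih =>
      intro x hx
      have hx' : |x| ≤ (m:ℝ) := by push_cast at hx; linarith
      have happrox := hGapprox (m+1) (SS m).1 (SS m).2 x
      have hηe : η (m+1) ≤ (1/2:ℝ)^(m+1) * (ε x / 2) := by
        refine le_trans (hη2 (m+1)) ?_
        apply mul_le_mul_of_nonneg_left _ (by positivity)
        have := hδle (m+1) x (by push_cast; linarith)
        linarith
      have hdec : f x - (SS (m+1)).1 x
          = ((1 - psi (m+1) x : ℝ):ℂ) * (f x - (SS m).1 x)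
            + (((psi (m+1) x : ℝ):ℂ) * (f x - (SS m).1 x)
              - G (m+1) (SS m).1 (SS m).2 x) := by
        rw [hSSs]
        push_cast
        ring
      have hnψ : ‖((1 - psi (m+1) x : ℝ):ℂ)‖ = 1 - psi (m+1) x := by
        rw [Complex.norm_real, Real.norm_eq_abs,
          _root_.abs_of_nonneg (by linarith [psi_le_one (m+1) x])]
      have hsecond : ‖((psi (m+1) x : ℝ):ℂ) * (f x - (SS m).1 x)
          - G (m+1) (SS m).1 (SS m).2 x‖ ≤ η (m+1) := by
        rw [norm_sub_rev]; exact happrox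
      rcases le_or_gt (|x|) ((m:ℝ) - 1) with hin | hout
      · have h1 := ih x hin
        have hψ1 : 1 - psi (m+1) x ≤ 1 := by linarith [psi_nonneg (m+1) x]
        calc ‖f x - (SS (m+1)).1 x‖
            ≤ ‖((1 - psi (m+1) x : ℝ):ℂ) * (f x - (SS m).1 x)‖
              + ‖((psi (m+1) x : ℝ):ℂ) * (f x - (SS m).1 x)
                - G (m+1) (SS m).1 (SS m).2 x‖ := by rw [hdec]; exact norm_add_le _ _
          _ ≤ 1 * ‖f x - (SS m).1 x‖ + η (m+1) := by
              apply add_le_add _ hsecond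
              rw [norm_mul, hnψ]
              apply mul_le_mul_of_nonneg_right hψ1 (norm_nonneg _)
          _ ≤ (1 - (1/2:ℝ)^m) * (ε x / 2) + (1/2:ℝ)^(m+1) * (ε x / 2) := by
              rw [one_mul]; exact add_le_add h1 hηe
          _ = (1 - (1/2:ℝ)^(m+1)) * (ε x / 2) := by rw [pow_succ]; ring
      · have hψ1 : psi (m+1) x = 1 := by
          apply psi_eq_one
          · push_cast; linarith
          · push_cast; linarith
        have : f x - (SS (m+1)).1 x
            = (((psi (m+1) x : ℝ):ℂ) * (f x - (SS m).1 x)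
              - G (m+1) (SS m).1 (SS m).2 x) := by
          rw [hdec, hψ1]
          push_cast
          ring
        rw [this]
        refine le_trans hsecond (le_trans hηe ?_)
        have hp : (1/2:ℝ)^(m+1) ≤ 1/2 := by
          calc (1/2:ℝ)^(m+1) ≤ (1/2:ℝ)^1 :=
            pow_le_pow_of_le_one (by norm_num) (by norm_num) (by omega)
          _ = 1/2 := by norm_num
        have hε2 : 0 ≤ ε x / 2 := by linarith [hεpos x]
        nlinarith
  -- the increments and their disc bounds
  set inc : ℕ → ℂ → ℂ := fun m z => (SS (m+1)).1 z - (SS m).1 z with hincdef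
  have hinc : ∀ m z, inc m z = G (m+1) (SS m).1 (SS m).2 z := by
    intro m z
    rw [hincdef]
    simp only [hSSs]
    ring
  have hinc_disc : ∀ (m : ℕ) (z : ℂ), ‖z‖ ≤ ((m:ℝ) - 2)/2 → ‖inc m z‖ ≤ (1/2:ℝ)^m := by
    intro m z hz
    rw [hinc]
    refine le_trans (hGdisc (m+1) (SS m).1 (SS m).2 z ?_) (le_trans (hη1 (m+1)) ?_)
    · push_cast; linarith
    · apply pow_le_pow_of_le_one (by norm_num) (by norm_num) (by omega)
  have hsummable : ∀ z : ℂ, Summable (fun m => inc m z) := by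
    intro z
    apply Summable.of_norm_bounded_eventually_nat (g := fun m => (1/2:ℝ)^m)
      summable_geometric_two
    obtain ⟨N, hN⟩ := exists_nat_ge (2*‖z‖ + 2)
    filter_upwards [eventually_ge_atTop N] with m hm
    apply hinc_disc
    have h1 : (N:ℝ) ≤ (m:ℝ) := by exact_mod_cast hm
    linarith
  set gfun : ℂ → ℂ := fun z => ∑' m, inc m z with hgdef
  have hpartial : ∀ (n : ℕ) (z : ℂ), (∑ m ∈ Finset.range n, inc m z) = (SS n).1 z := by
    intro n z
    rw [hincdef]
    rw [Finset.sum_range_sub (fun m => (SS m).1 z)]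
    rw [hSS0, sub_zero]
  have htail : ∀ (n : ℕ) (z : ℂ), 2*‖z‖ + 2 ≤ (n:ℝ) →
      ‖gfun z - (SS n).1 z‖ ≤ (1/2:ℝ)^n * 2 := by
    intro n z hn
    have hknorm : ∀ i : ℕ, ‖inc (i + n) z‖ ≤ (1/2:ℝ)^(i+n) := by
      intro i
      apply hinc_disc
      have h1 : (n:ℝ) ≤ ((i+n:ℕ):ℝ) := by exact_mod_cast Nat.le_add_left n i
      linarith
    have hsum2 : Summable (fun i : ℕ => (1/2:ℝ)^(i+n)) := by
      simp_rw [pow_add]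
      exact summable_geometric_two.mul_right _
    have hsum1 : Summable (fun i : ℕ => ‖inc (i + n) z‖) :=
      Summable.of_nonneg_of_le (fun i => norm_nonneg _) hknorm hsum2
    have heq : gfun z - (SS n).1 z = ∑' i, inc (i + n) z := by
      rw [hgdef]
      have h := Summable.sum_add_tsum_nat_add n (hsummable z)
      rw [hpartial n z] at h
      simp only
      linear_combination -h
    rw [heq]
    calc ‖∑' i, inc (i + n) z‖ ≤ ∑' i, ‖inc (i + n) z‖ :=
        norm_tsum_le_tsum_norm hsum1
      _ ≤ ∑' i : ℕ, (1/2:ℝ)^(i+n) := Summable.tsum_le_tsum hknorm hsum1 hsum2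
      _ = (1/2:ℝ)^n * 2 := by
          simp_rw [pow_add]
          rw [tsum_mul_right, tsum_geometric_two]
          ring
  -- locally uniform convergence and differentiability
  have hTLU : TendstoLocallyUniformlyOn (fun n z => (SS n).1 z) gfun atTop univ := by
    rw [tendstoLocallyUniformlyOn_iff_forall_isCompact isOpen_univ]
    intro K _ hK
    obtain ⟨R, hKR⟩ := hK.isBounded.subset_closedBall 0
    rw [Metric.tendstoUniformlyOn_iff]
    intro ϵ hϵ
    have h2 : Tendsto (fun n : ℕ => ((1/2:ℝ)^n) * 2) atTop (𝓝 0) := by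
      simpa using (tendsto_pow_atTop_nhds_zero_of_lt_one (by norm_num : (0:ℝ) ≤ 1/2)
        (by norm_num : (1/2:ℝ) < 1)).mul_const 2
    obtain ⟨N, hN⟩ := exists_nat_ge (2*(max R 0) + 2)
    filter_upwards [h2.eventually_lt_const hϵ, eventually_ge_atTop N] with n h1 hn z hzK
    rw [dist_eq_norm]
    refine lt_of_le_of_lt (htail n z ?_) h1
    have hz : ‖z‖ ≤ max R 0 := by
      have := hKR hzK
      rw [mem_closedBall, dist_zero_right] at this
      exact le_trans this (le_max_left _ _)
    have h3 : (N:ℝ) ≤ (n:ℝ) := by exact_mod_cast hn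
    linarith
  have hgdiff : Differentiable ℂ gfun := by
    have h := hTLU.differentiableOn
      (Filter.Eventually.of_forall fun n => ((SS n).2).differentiableOn) isOpen_univ
    rwa [differentiableOn_univ] at h
  refine ⟨gfun, hgdiff, fun x => ?_⟩
  have hconv : Tendsto (fun n => ‖f x - (SS n).1 (x:ℂ)‖) atTop (𝓝 (‖f x - gfun x‖)) := by
    have h1 : Tendsto (fun n => (SS n).1 (x:ℂ)) atTop (𝓝 (gfun x)) := by
      have h := (hsummable (x:ℂ)).hasSum.tendsto_sum_nat
      have heq : (fun n => ∑ m ∈ Finset.range n, inc m (x:ℂ))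
          = fun n => (SS n).1 (x:ℂ) := funext fun n => hpartial n (x:ℂ)
      rwa [heq] at h
    exact (tendsto_const_nhds.sub h1).norm
  have hev : ∀ᶠ n : ℕ in atTop, ‖f x - (SS n).1 (x:ℂ)‖ ≤ ε x / 2 := by
    obtain ⟨N, hN⟩ := exists_nat_ge (|x| + 1)
    filter_upwards [eventually_ge_atTop N] with n hn
    have h2 : |x| ≤ (n:ℝ) - 1 := by
      have h3 : (N:ℝ) ≤ (n:ℝ) := by exact_mod_cast hn
      linarith
    refine le_trans (inv n x h2) ?_
    have h4 : (0:ℝ) ≤ (1/2:ℝ)^n := by positivity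
    nlinarith [hεpos x]
  have hfinal : ‖f x - gfun x‖ ≤ ε x / 2 := le_of_tendsto hconv hev
  linarith [hεpos x]
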